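/- For every integer k ≥ 1, the element t_k = s_{1,2} · s_{1,4} · s_{1,8} ⋯ s_{1,2^k} (the product, in increasing order of j, of the generators s_{1,2^j} for j = 1, …, k) of the cactus group J_{2^k} has order exactly 2^k. -/

import Mathlib

/-- The set of intervals `[p,q]`, `1 ≤ p < q ≤ n`, indexing the generators `s_{p,q}`
of the cactus group `J_n`. -/
def cactusSet (n : ℕ) : Set (ℕ × ℕ) := {pq | 1 ≤ pq.1 ∧ pq.1 < pq.2 ∧ pq.2 ≤ n}

/-- The defining relations (j1)-(j3) of the cactus group, restricted to a collection `C`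
of generating intervals: exactly those cactus relations involving only generators from `C`. -/
def cactusRels (C : Set (ℕ × ℕ)) : Set (FreeGroup C) :=
  {w | (∃ a : C, w = FreeGroup.of a * FreeGroup.of a) ∨
    (∃ a b : C, (a.1.2 < b.1.1 ∨ b.1.2 < a.1.1) ∧
      w = FreeGroup.of a * FreeGroup.of b * (FreeGroup.of a)⁻¹ * (FreeGroup.of b)⁻¹) ∨
    (∃ a b c : C, a.1.1 ≤ b.1.1 ∧ b.1.2 ≤ a.1.2 ∧
      c.1.1 = a.1.1 + a.1.2 - b.1.2 ∧ c.1.2 = a.1.1 + a.1.2 - b.1.1 ∧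
      w = FreeGroup.of a * FreeGroup.of b * (FreeGroup.of a)⁻¹ * (FreeGroup.of c)⁻¹)}

/-- The group presented by the generators `s_I`, `I ∈ C`, and those cactus relations
involving only these generators. -/
abbrev PartialCactusGroup (C : Set (ℕ × ℕ)) := PresentedGroup (cactusRels C)

/-- The cactus group `J_n`. -/
abbrev CactusGroup (n : ℕ) := PartialCactusGroup (cactusSet n)


/-- The generator `s_{1,2^j}` of `J_{2^k}`. -/
def tGen (k j : ℕ) : CactusGroup (2 ^ k) :=
  if h : (1 : ℕ) < 2 ^ j ∧ 2 ^ j ≤ 2 ^ k then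
    PresentedGroup.of ⟨(1, 2 ^ j), ⟨le_refl 1, h.1, h.2⟩⟩
  else 1

/-- The element `t_k = s_{1,2} s_{1,4} s_{1,8} ⋯ s_{1,2^k}` of `J_{2^k}`. -/
def tElem (k : ℕ) : CactusGroup (2 ^ k) :=
  ((List.range k).map (fun j => tGen k (j + 1))).prod

/-! ### Auxiliary material: interval reversal permutations -/

def revFun (p q x : ℕ) : ℕ := if p ≤ x ∧ x ≤ q then p + q - x else x

lemma revFun_invol (p q x : ℕ) : revFun p q (revFun p q x) = x := by
  unfold revFun; split_ifs <;> omega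

def rev (p q : ℕ) : Equiv.Perm ℕ :=
  ⟨revFun p q, revFun p q, revFun_invol p q, revFun_invol p q⟩

@[simp] lemma rev_apply (p q x : ℕ) : rev p q x = revFun p q x := rfl

@[simp] lemma rev_inv (p q : ℕ) : (rev p q)⁻¹ = rev p q := rfl

lemma rev_mul_self (p q : ℕ) : rev p q * rev p q = 1 := by
  ext x; simp [Equiv.Perm.mul_apply, revFun_invol]

lemma rev_comm (p q m r : ℕ) (h : q < m ∨ r < p) :
    rev p q * rev m r = rev m r * rev p q := by
  ext x; simp only [Equiv.Perm.mul_apply, rev_apply, revFun]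
  split_ifs <;> omega

lemma rev_conj (p q m r : ℕ) (hp : 1 ≤ p) (hm : p ≤ m) (hmr : m < r) (hr : r ≤ q) :
    rev p q * rev m r * rev p q = rev (p + q - r) (p + q - m) := by
  ext x; simp only [Equiv.Perm.mul_apply, rev_apply, revFun]
  split_ifs <;> omega

/-! ### Homomorphisms out of partial cactus groups -/

lemma rels_to_one {C : Set (ℕ × ℕ)} {G : Type*} [Group G] (f : C → G)
    (h1 : ∀ a : C, f a * f a = 1)
    (h2 : ∀ a b : C, (a.1.2 < b.1.1 ∨ b.1.2 < a.1.1) → f a * f b = f b * f a)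
    (h3 : ∀ a b c : C, a.1.1 ≤ b.1.1 → b.1.2 ≤ a.1.2 →
      c.1.1 = a.1.1 + a.1.2 - b.1.2 → c.1.2 = a.1.1 + a.1.2 - b.1.1 →
      f a * f b * (f a)⁻¹ = f c) :
    ∀ r ∈ cactusRels C, FreeGroup.lift f r = 1 := by
  rintro r (⟨a, rfl⟩ | ⟨a, b, hab, rfl⟩ | ⟨a, b, c, hab1, hab2, hc1, hc2, rfl⟩) <;>
    simp only [map_mul, map_inv, FreeGroup.lift_apply_of]
  · exact h1 a
  · rw [h2 a b hab]; group
  · rw [h3 a b c hab1 hab2 hc1 hc2]; group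

def cactusPerm (n : ℕ) : CactusGroup n →* Equiv.Perm ℕ :=
  PresentedGroup.toGroup (f := fun a => rev a.1.1 a.1.2)
    (rels_to_one _ (fun _ => rev_mul_self _ _)
      (fun a b h => rev_comm _ _ _ _ (by tauto))
      (fun a b c h1 h2 h3 h4 => by
        obtain ⟨ha1, _, _⟩ := a.2
        obtain ⟨_, hb2, _⟩ := b.2
        rw [rev_inv, rev_conj a.1.1 a.1.2 b.1.1 b.1.2 ha1 h1 hb2 h2, h3, h4]))

lemma mk_rel {C : Set (ℕ × ℕ)} {r : FreeGroup C} (h : r ∈ cactusRels C) :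
    (PresentedGroup.mk (cactusRels C) r : PartialCactusGroup C) = 1 :=
  (QuotientGroup.eq_one_iff r).mpr (Subgroup.subset_normalClosure h)

lemma gen_sq {C : Set (ℕ × ℕ)} (a : C) :
    (PresentedGroup.of a : PartialCactusGroup C) * PresentedGroup.of a = 1 := by
  have := mk_rel (C := C) (Or.inl ⟨a, rfl⟩)
  simp only [map_mul] at this
  exact this

lemma gen_comm {C : Set (ℕ × ℕ)} (a b : C) (h : a.1.2 < b.1.1 ∨ b.1.2 < a.1.1) :
    (PresentedGroup.of a : PartialCactusGroup C) * PresentedGroup.of b =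
      PresentedGroup.of b * PresentedGroup.of a := by
  have := mk_rel (C := C) (Or.inr (Or.inl ⟨a, b, h, rfl⟩))
  simp only [map_mul, map_inv] at this
  have h2 : (PresentedGroup.of a : PartialCactusGroup C) * PresentedGroup.of b *
      (PresentedGroup.of a)⁻¹ * (PresentedGroup.of b)⁻¹ = 1 := this
  calc (PresentedGroup.of a : PartialCactusGroup C) * PresentedGroup.of b
      = (PresentedGroup.of a * PresentedGroup.of b * (PresentedGroup.of a)⁻¹ *
        (PresentedGroup.of b)⁻¹) * (PresentedGroup.of b * PresentedGroup.of a) := by group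
    _ = _ := by rw [h2]; group

lemma gen_conj {C : Set (ℕ × ℕ)} (a b c : C) (h1 : a.1.1 ≤ b.1.1) (h2 : b.1.2 ≤ a.1.2)
    (h3 : c.1.1 = a.1.1 + a.1.2 - b.1.2) (h4 : c.1.2 = a.1.1 + a.1.2 - b.1.1) :
    (PresentedGroup.of a : PartialCactusGroup C) * PresentedGroup.of b *
      (PresentedGroup.of a)⁻¹ = PresentedGroup.of c := by
  have := mk_rel (C := C) (Or.inr (Or.inr ⟨a, b, c, h1, h2, h3, h4, rfl⟩))
  simp only [map_mul, map_inv] at this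
  have h5 : (PresentedGroup.of a : PartialCactusGroup C) * PresentedGroup.of b *
      (PresentedGroup.of a)⁻¹ * (PresentedGroup.of c)⁻¹ = 1 := this
  calc (PresentedGroup.of a : PartialCactusGroup C) * PresentedGroup.of b *
        (PresentedGroup.of a)⁻¹
      = (PresentedGroup.of a * PresentedGroup.of b * (PresentedGroup.of a)⁻¹ *
        (PresentedGroup.of c)⁻¹) * PresentedGroup.of c := by group
    _ = _ := by rw [h5]; group

def cactusIncl {C D : Set (ℕ × ℕ)} (h : C ⊆ D) :
    PartialCactusGroup C →* PartialCactusGroup D :=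
  PresentedGroup.toGroup (f := fun a => (PresentedGroup.of ⟨a.1, h a.2⟩ : PartialCactusGroup D))
    (rels_to_one _ (fun _ => gen_sq _)
      (fun _ _ hab => gen_comm _ _ hab)
      (fun _ _ _ h1 h2 h3 h4 => gen_conj _ _ _ h1 h2 h3 h4))

@[simp] lemma cactusIncl_of {C D : Set (ℕ × ℕ)} (h : C ⊆ D) (a : C) :
    cactusIncl h (PresentedGroup.of a) = PresentedGroup.of ⟨a.1, h a.2⟩ :=
  PresentedGroup.toGroup.of _

@[simp] lemma cactusPerm_of {n : ℕ} (a : cactusSet n) :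
    cactusPerm n (PresentedGroup.of a) = rev a.1.1 a.1.2 :=
  PresentedGroup.toGroup.of _

/-! ### The permutation image of `t_k` and its order -/

def Q (k : ℕ) : Equiv.Perm ℕ := ((List.range k).map (fun j => rev 1 (2 ^ (j + 1)))).prod

lemma Q_succ (k : ℕ) : Q (k + 1) = Q k * rev 1 (2 ^ (k + 1)) := by
  unfold Q
  rw [List.range_succ, List.map_append, List.prod_append]
  simp

lemma Q_fix (k : ℕ) (x : ℕ) (hx : x = 0 ∨ 2 ^ k < x) : Q k x = x := by
  induction k with
  | zero => simp [Q]
  | succ k ih =>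
    rw [Q_succ]
    have h2 : (2:ℕ) ^ k < 2 ^ (k + 1) := by
      have := Nat.one_le_two_pow (n := k); omega
    have : rev 1 (2 ^ (k + 1)) x = x := by
      simp only [rev_apply, revFun]; split_ifs <;> omega
    rw [Equiv.Perm.mul_apply, this, ih (by omega)]

lemma Q_mem (k : ℕ) (x : ℕ) (hx : 1 ≤ x) (hx2 : x ≤ 2 ^ k) :
    1 ≤ Q k x ∧ Q k x ≤ 2 ^ k := by
  induction k generalizing x with
  | zero =>
    have h0 : Q 0 = 1 := by simp [Q]
    rw [h0]; simp; omega
  | succ k ih =>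
    rw [Q_succ, Equiv.Perm.mul_apply]
    have h2 : (2:ℕ) ^ k < 2 ^ (k + 1) := by
      have := Nat.one_le_two_pow (n := k); omega
    set y := rev 1 (2 ^ (k + 1)) x with hy
    have hy1 : 1 ≤ y ∧ y ≤ 2 ^ (k + 1) := by
      simp only [hy, rev_apply, revFun]; split_ifs <;> omega
    by_cases hc : y ≤ 2 ^ k
    · have := ih y hy1.1 hc; omega
    · rw [Q_fix k y (by omega)]; omega

lemma Q_sq (k : ℕ) (x : ℕ) (hx : 1 ≤ x) (hx2 : x ≤ 2 ^ k) :
    Q (k + 1) (Q (k + 1) x) = Q k x := by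
  have h2 : (2:ℕ) ^ k < 2 ^ (k + 1) := by
    have := Nat.one_le_two_pow (n := k); omega
  rw [Q_succ]
  simp only [Equiv.Perm.mul_apply]
  have hrx : rev 1 (2 ^ (k + 1)) x = 1 + 2 ^ (k + 1) - x := by
    simp only [rev_apply, revFun]; split_ifs <;> omega
  rw [hrx, Q_fix k (1 + 2 ^ (k + 1) - x) (by omega)]
  have : rev 1 (2 ^ (k + 1)) (1 + 2 ^ (k + 1) - x) = x := by
    simp only [rev_apply, revFun]; split_ifs <;> omega
  rw [this]

lemma Q_pow (k m : ℕ) (x : ℕ) (hx : 1 ≤ x) (hx2 : x ≤ 2 ^ k) :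
    (Q (k + 1) ^ (2 * m)) x = (Q k ^ m) x := by
  induction m generalizing x with
  | zero => simp
  | succ m ih =>
    have e1 : 2 * (m + 1) = 2 * m + 2 := by ring
    have e2 : Q (k + 1) ^ (2 * m + 2) = Q (k + 1) ^ (2 * m) * (Q (k+1) * Q (k+1)) := by
      rw [pow_add, pow_two]
    have e3 : Q k ^ (m + 1) = Q k ^ m * Q k := pow_succ _ _
    rw [e1, e2, e3, Equiv.Perm.mul_apply, Equiv.Perm.mul_apply, Equiv.Perm.mul_apply,
      Q_sq k x hx hx2]
    have hm := Q_mem k x hx hx2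
    exact ih _ hm.1 hm.2

lemma Q_key (k : ℕ) : (Q (k + 1) ^ (2 ^ k)) 1 = 2 := by
  induction k with
  | zero =>
    have h0 : Q 1 = rev 1 2 := by simp [Q, List.range_succ]
    rw [pow_zero, pow_one, h0]
    simp [revFun]
  | succ k ih =>
    have : (2:ℕ) ^ (k + 1) = 2 * 2 ^ k := by ring
    rw [this, Q_pow (k + 1) (2 ^ k) 1 (by omega) Nat.one_le_two_pow, ih]

/-! ### Group-theoretic facts about `t_k` -/

lemma two_pow_le {j k : ℕ} (h : j ≤ k) : (2:ℕ) ^ j ≤ 2 ^ k :=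
  Nat.pow_le_pow_right (by omega) h

lemma one_lt_two_pow_of_pos {j : ℕ} (h : 1 ≤ j) : 1 < (2:ℕ) ^ j :=
  lt_of_lt_of_le one_lt_two (by simpa using two_pow_le h)

lemma tGen_eq {k j : ℕ} (h : (1:ℕ) < 2 ^ j ∧ 2 ^ j ≤ 2 ^ k) :
    tGen k j = PresentedGroup.of ⟨(1, 2 ^ j), ⟨le_refl 1, h.1, h.2⟩⟩ := dif_pos h

lemma hsub (k : ℕ) : cactusSet (2 ^ k) ⊆ cactusSet (2 ^ (k + 1)) := by
  rintro ⟨p, q⟩ ⟨h1, h2, h3⟩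
  exact ⟨h1, h2, le_trans h3 (two_pow_le (by omega))⟩

lemma tElem_pow_eq_one (k : ℕ) : (tElem k) ^ (2 ^ k) = 1 := by
  induction k with
  | zero => simp [tElem]
  | succ k ih =>
    set ι := cactusIncl (hsub k) with hι
    have hcond : ∀ j, j < k + 1 → (1:ℕ) < 2 ^ (j+1) ∧ 2 ^ (j+1) ≤ 2 ^ (k+1) :=
      fun j hj => ⟨one_lt_two_pow_of_pos (by omega), two_pow_le (by omega)⟩
    have hmap : ∀ j ∈ List.range k, ι (tGen k (j+1)) = tGen (k+1) (j+1) := by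
      intro j hj
      rw [List.mem_range] at hj
      rw [tGen_eq (k := k) ⟨one_lt_two_pow_of_pos (by omega), two_pow_le (by omega)⟩,
        tGen_eq (hcond j (by omega)), cactusIncl_of]
    set u := ι (tElem k) with hu
    have huprod : u = ((List.range k).map (fun j => tGen (k+1) (j+1))).prod := by
      rw [hu, tElem, map_list_prod, List.map_map]
      exact congrArg List.prod (List.map_congr_left hmap)
    set s := tGen (k+1) (k+1) with hsdef
    have hsof : s = PresentedGroup.of ⟨(1, 2 ^ (k+1)),
        ⟨le_refl 1, (hcond (k) (by omega)).1, (hcond k (by omega)).2⟩⟩ :=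
      tGen_eq (hcond k (by omega))
    have hss : s * s = 1 := by rw [hsof]; exact gen_sq _
    have hsinv : s⁻¹ = s := mul_eq_one_iff_inv_eq.mp hss
    have hts : tElem (k+1) = u * s := by
      rw [tElem, List.range_succ, List.map_append, List.prod_append, huprod]
      simp
      rfl
    set u' := s * u * s⁻¹ with hu'
    have hupow : u ^ (2 ^ k) = 1 := by rw [hu, ← map_pow, ih, map_one]
    have hu'aut : u' = (MulAut.conj s) u := by simp [hu', MulAut.conj_apply]
    have hu'pow : u' ^ (2 ^ k) = 1 := by
      rw [hu'aut, ← map_pow, hupow, map_one]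
    -- conjugates of the generators
    have hconj : ∀ (j : ℕ) (hj : j < k), (MulAut.conj s) (tGen (k+1) (j+1)) =
        PresentedGroup.of (⟨(2 ^ (k+1) + 1 - 2 ^ (j+1), 2 ^ (k+1)), by
          refine ⟨?_, ?_, le_refl _⟩ <;>
          · have := (hcond j (by omega)).1
            have := (hcond j (by omega)).2
            omega⟩ : cactusSet (2 ^ (k+1))) := by
      intro j hj
      rw [MulAut.conj_apply, hsof, tGen_eq (hcond j (by omega))]
      refine gen_conj _ _ _ (le_refl _) (hcond j (by omega)).2 ?_ ?_
      · show 2 ^ (k+1) + 1 - 2 ^ (j+1) = 1 + 2 ^ (k+1) - 2 ^ (j+1)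
        rw [Nat.add_comm (2 ^ (k+1)) 1]
      · show 2 ^ (k+1) = 1 + 2 ^ (k+1) - 1
        rw [Nat.add_comm 1 (2 ^ (k+1)), Nat.add_sub_cancel]
    have hcomm : Commute u u' := by
      rw [huprod, hu'aut, huprod, map_list_prod, List.map_map]
      refine Commute.list_prod_left _ _ ?_
      intro x hx
      rw [List.mem_map] at hx
      obtain ⟨i, hi, rfl⟩ := hx
      rw [List.mem_range] at hi
      refine Commute.list_prod_right _ _ ?_
      intro y hy
      rw [List.mem_map] at hy
      obtain ⟨j, hj, rfl⟩ := hy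
      rw [List.mem_range] at hj
      show Commute (tGen (k+1) (i+1)) ((MulAut.conj s) (tGen (k+1) (j+1)))
      rw [hconj j hj, tGen_eq (hcond i (by omega))]
      refine gen_comm _ _ ?_
      left
      show 2 ^ (i+1) < 2 ^ (k+1) + 1 - 2 ^ (j+1)
      have h1 : (2:ℕ) ^ (i+1) ≤ 2 ^ k := two_pow_le (by omega)
      have h2 : (2:ℕ) ^ (j+1) ≤ 2 ^ k := two_pow_le (by omega)
      have h3 : (2:ℕ) ^ (k+1) = 2 ^ k + 2 ^ k := by ring
      omega
    have ht2 : (tElem (k+1)) ^ 2 = u * u' := by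
      have : (u * s) * (u * s) = u * (s * u * s⁻¹) * (s * s) := by group
      rw [hts, pow_two, this, hss, mul_one, hu']
    calc (tElem (k+1)) ^ (2 ^ (k+1)) = ((tElem (k+1)) ^ 2) ^ (2 ^ k) := by
          rw [← pow_mul]; ring_nf
      _ = (u * u') ^ (2 ^ k) := by rw [ht2]
      _ = u ^ (2 ^ k) * u' ^ (2 ^ k) := hcomm.mul_pow _
      _ = 1 := by rw [hupow, hu'pow, mul_one]

lemma perm_tElem (k : ℕ) : cactusPerm (2 ^ k) (tElem k) = Q k := by
  rw [tElem, map_list_prod, List.map_map, Q]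
  refine congrArg List.prod (List.map_congr_left ?_)
  intro j hj
  rw [List.mem_range] at hj
  show cactusPerm (2 ^ k) (tGen k (j+1)) = rev 1 (2 ^ (j+1))
  rw [tGen_eq ⟨one_lt_two_pow_of_pos (by omega), two_pow_le (by omega)⟩, cactusPerm_of]

/-- For every `k ≥ 1`, the element `t_k = s_{1,2} s_{1,4} ⋯ s_{1,2^k}` of
`J_{2^k}` has order exactly `2^k`. -/
theorem cactus_two_torsion (k : ℕ) (hk : 1 ≤ k) : orderOf (tElem k) = 2 ^ k := by
  have h1 : (tElem k) ^ (2 ^ k) = 1 := tElem_pow_eq_one k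
  have hdvd : orderOf (tElem k) ∣ 2 ^ k := orderOf_dvd_of_pow_eq_one h1
  have hne : (tElem k) ^ (2 ^ (k - 1)) ≠ 1 := by
    intro h
    have hQ : (Q k) ^ (2 ^ (k - 1)) = 1 := by
      rw [← perm_tElem, ← map_pow, h, map_one]
    have h2 : ((Q k) ^ (2 ^ (k - 1))) 1 = 1 := by rw [hQ]; rfl
    have h3 := Q_key (k - 1)
    rw [Nat.sub_add_cancel hk] at h3
    omega
  obtain ⟨d, hdk, hd⟩ := (Nat.dvd_prime_pow Nat.prime_two).mp hdvd
  have hdk' : d = k := by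
    by_contra hne2
    exact hne (orderOf_dvd_iff_pow_eq_one.mp
      (hd ▸ pow_dvd_pow 2 (by omega : d ≤ k - 1)))
  rw [hd, hdk']
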